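/- Let X be a finite nonempty set, F(X) the free group on X with S = X ∪ X⁻¹, and let A be a finitely generated group with finite symmetric generating set S_A. An element g = (f,x) of A ≀ F(X) satisfies ‖gs‖_{S_std} ≤ ‖g‖_{S_std} for every s ∈ S_std = S_A ∪ S (i.e., g is a dead end) if and only if the following three conditions hold: (1) f(x) is a dead end of (A,S_A), i.e. ‖f(x)·a‖_{S_A} ≤ ‖f(x)‖_{S_A} for all a ∈ S_A; (2) for every s ∈ S, the edge joining x and xs belongs to [e_{F(X)}, supp(f)]; and (3) x = e_{F(X)}. -/

import Mathlib

open scoped Classical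

/-- The word length of `g` with respect to a generating set `S`: the least `n` such that
`g` is a product of `n` elements of `S`. -/
noncomputable def wordLength {G : Type*} [Group G] (S : Set G) (g : G) : ℕ :=
  sInf {n | ∃ l : List G, (∀ x ∈ l, x ∈ S) ∧ l.length = n ∧ l.prod = g}

/-- `g` has depth at least `n` with respect to `S`: multiplying `g` by between `1` and `n`
generators of `S` never increases word length. -/
def HasDepthAtLeast {G : Type*} [Group G] (S : Set G) (g : G) (n : ℕ) : Prop :=
  ∀ l : List G, (∀ x ∈ l, x ∈ S) → 1 ≤ l.length → l.length ≤ n →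
    wordLength S (g * l.prod) ≤ wordLength S g

/-- `(G, S)` has unbounded depth: for every `n` there is an element of depth at least `n`. -/
def UnboundedDepth {G : Type*} [Group G] (S : Set G) : Prop :=
  ∀ n : ℕ, ∃ g : G, HasDepthAtLeast S g n

/-- `S` is a finite symmetric generating set of `G`. -/
structure IsSymmGen {G : Type*} [Group G] (S : Set G) : Prop where
  finite : S.Finite
  symm : ∀ s ∈ S, s⁻¹ ∈ S
  closure_eq_top : Subgroup.closure S = ⊤

/-- The group of finitely supported functions `B → A`, as a subgroup of the direct
product `B → A`. -/
def FinSuppSubgroup (A B : Type*) [Group A] : Subgroup (B → A) where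
  carrier := {f | (Function.mulSupport f).Finite}
  one_mem' := by
    simp [Function.mulSupport_one]
  mul_mem' := by
    intro f g hf hg
    exact Set.Finite.subset (hf.union hg) (Function.mulSupport_mul f g)
  inv_mem' := by
    intro f hf
    simpa [Function.mulSupport_inv] using hf

/-- Left translation by `b ∈ B` on finitely supported functions: `(b · f) x = f (b⁻¹ x)`. -/
def lampTranslate (A B : Type*) [Group A] [Group B] (b : B) :
    FinSuppSubgroup A B ≃* FinSuppSubgroup A B where
  toFun f := ⟨fun x => (f : B → A) (b⁻¹ * x), by
    have h : Function.mulSupport (fun x => (f : B → A) (b⁻¹ * x)) ⊆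
        (fun x : B => b⁻¹ * x) ⁻¹' Function.mulSupport (f : B → A) := fun x hx => hx
    exact Set.Finite.subset
      (Set.Finite.preimage (Set.injOn_of_injective (mul_right_injective b⁻¹)) f.2) h⟩
  invFun f := ⟨fun x => (f : B → A) (b * x), by
    have h : Function.mulSupport (fun x => (f : B → A) (b * x)) ⊆
        (fun x : B => b * x) ⁻¹' Function.mulSupport (f : B → A) := fun x hx => hx
    exact Set.Finite.subset
      (Set.Finite.preimage (Set.injOn_of_injective (mul_right_injective b)) f.2) h⟩
  left_inv f := Subtype.ext (funext fun x => by simp)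
  right_inv f := Subtype.ext (funext fun x => by simp)
  map_mul' f g := rfl

/-- The action of `B` on finitely supported functions `B → A` by left translation. -/
def lampAction (A B : Type*) [Group A] [Group B] :
    B →* MulAut (FinSuppSubgroup A B) where
  toFun := lampTranslate A B
  map_one' := by
    apply MulEquiv.ext
    intro f
    apply Subtype.ext
    funext x
    show (f : B → A) ((1 : B)⁻¹ * x) = (f : B → A) x
    simp
  map_mul' b c := by
    apply MulEquiv.ext
    intro f
    apply Subtype.ext
    funext x
    show (f : B → A) ((b * c)⁻¹ * x) = (f : B → A) (c⁻¹ * (b⁻¹ * x))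
    rw [mul_inv_rev, mul_assoc]

/-- The restricted wreath product `A ≀ B`, i.e. the semidirect product
`(⨁_B A) ⋊ B` where `B` acts by left translation. -/
abbrev Wreath (A B : Type*) [Group A] [Group B] :=
  FinSuppSubgroup A B ⋊[lampAction A B] B

/-- `δ_a`: the finitely supported function sending `1 ∈ B` to `a` and everything else
to `1 ∈ A`. -/
noncomputable def lampSingle (A B : Type*) [Group A] [Group B] (a : A) :
    FinSuppSubgroup A B :=
  ⟨fun x => if x = (1 : B) then a else 1, by
    apply Set.Finite.subset (Set.finite_singleton (1 : B))
    intro x hx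
    simp only [Set.mem_singleton_iff]
    by_contra h
    exact hx (if_neg h)⟩

/-- The standard generating set `S_A ∪ S_B` of the wreath product `A ≀ B`, where
`a ∈ S_A` is identified with `(δ_a, 1)` and `b ∈ S_B` with `(𝟙, b)`. -/
noncomputable def stdGen {A B : Type*} [Group A] [Group B] (SA : Set A) (SB : Set B) :
    Set (Wreath A B) :=
  ((fun a => SemidirectProduct.inl (lampSingle A B a)) '' SA) ∪
    ((fun b => SemidirectProduct.inr b) '' SB)

/-- The symmetric generating set `X ∪ X⁻¹` of the free group `F(X)`. -/
def freeGenSet (X : Type*) : Set (FreeGroup X) :=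
  {g | ∃ x : X, g = FreeGroup.of x ∨ g = (FreeGroup.of x)⁻¹}

/-- `[u, v]`: the set of edges of the unique geodesic from `u` to `v` in the Cayley
tree of `F(X)` with respect to `X ∪ X⁻¹`; its vertices are `u` multiplied by the
prefixes of the reduced word of `u⁻¹v`. -/
def geodEdges {X : Type*} [DecidableEq X] (u v : FreeGroup X) :
    Set (Sym2 (FreeGroup X)) :=
  {e | ∃ i < (FreeGroup.toWord (u⁻¹ * v)).length,
    e = s(u * FreeGroup.mk ((FreeGroup.toWord (u⁻¹ * v)).take i),
          u * FreeGroup.mk ((FreeGroup.toWord (u⁻¹ * v)).take (i + 1)))}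

/-- `[u, H]`: the union of the geodesic edge sets `[u, h]` over `h ∈ H`. -/
def geodUnion {X : Type*} [DecidableEq X] (u : FreeGroup X) (H : Set (FreeGroup X)) :
    Set (Sym2 (FreeGroup X)) :=
  ⋃ h ∈ H, geodEdges u h


set_option linter.unusedSectionVars false

section WordLength
variable {G : Type*} [Group G] {S : Set G}

lemma exists_word (hsymm : ∀ s ∈ S, s⁻¹ ∈ S) (htop : Subgroup.closure S = ⊤) (g : G) :
    ∃ l : List G, (∀ x ∈ l, x ∈ S) ∧ l.prod = g := by
  have hg : g ∈ Subgroup.closure S := htop ▸ Subgroup.mem_top g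
  induction hg using Subgroup.closure_induction with
  | mem x hx => exact ⟨[x], by simp [hx], by simp⟩
  | one => exact ⟨[], by simp, rfl⟩
  | mul x y _ _ hx hy =>
      obtain ⟨l1, h1, e1⟩ := hx
      obtain ⟨l2, h2, e2⟩ := hy
      refine ⟨l1 ++ l2, ?_, by simp [e1, e2]⟩
      intro z hz
      rcases List.mem_append.1 hz with h | h
      exacts [h1 z h, h2 z h]
  | inv x _ hx =>
      obtain ⟨l, h, e⟩ := hx
      refine ⟨(l.map Inv.inv).reverse, ?_, ?_⟩
      · intro z hz
        simp only [List.mem_reverse, List.mem_map] at hz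
        obtain ⟨a, ha, rfl⟩ := hz
        exact hsymm a (h a ha)
      · rw [← e, List.prod_inv_reverse]

lemma wordLength_le {g : G} {l : List G} (hl : ∀ x ∈ l, x ∈ S) (hp : l.prod = g) :
    wordLength S g ≤ l.length :=
  Nat.sInf_le ⟨l, hl, rfl, hp⟩

lemma wordLength_spec (hsymm : ∀ s ∈ S, s⁻¹ ∈ S) (htop : Subgroup.closure S = ⊤) (g : G) :
    ∃ l : List G, (∀ x ∈ l, x ∈ S) ∧ l.length = wordLength S g ∧ l.prod = g := by
  obtain ⟨l, hl, hp⟩ := exists_word hsymm htop g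
  have hne : {n | ∃ l : List G, (∀ x ∈ l, x ∈ S) ∧ l.length = n ∧ l.prod = g}.Nonempty :=
    ⟨l.length, l, hl, rfl, hp⟩
  exact Nat.sInf_mem hne

@[simp] lemma wordLength_one : wordLength S (1 : G) = 0 :=
  Nat.le_zero.1 (wordLength_le (l := []) (by simp) rfl)

lemma eq_one_of_wordLength_eq_zero (hsymm : ∀ s ∈ S, s⁻¹ ∈ S)
    (htop : Subgroup.closure S = ⊤) {g : G} (h : wordLength S g = 0) : g = 1 := by
  obtain ⟨l, _, hlen, hp⟩ := wordLength_spec hsymm htop g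
  rw [h] at hlen
  rw [← hp, List.length_eq_zero_iff.1 hlen, List.prod_nil]

lemma wordLength_mul_le (hsymm : ∀ s ∈ S, s⁻¹ ∈ S) (htop : Subgroup.closure S = ⊤)
    (g h : G) : wordLength S (g * h) ≤ wordLength S g + wordLength S h := by
  obtain ⟨l1, h1, e1, p1⟩ := wordLength_spec hsymm htop g
  obtain ⟨l2, h2, e2, p2⟩ := wordLength_spec hsymm htop h
  calc wordLength S (g * h) ≤ (l1 ++ l2).length := by
        refine wordLength_le ?_ (by simp [p1, p2])
        intro z hz; rcases List.mem_append.1 hz with hh | hh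
        exacts [h1 z hh, h2 z hh]
    _ = _ := by simp [e1, e2]

lemma wordLength_le_one {s : G} (hs : s ∈ S) : wordLength S s ≤ 1 :=
  wordLength_le (l := [s]) (by simp [hs]) (by simp)

lemma le_wordLength_mul (hsymm : ∀ s ∈ S, s⁻¹ ∈ S) (htop : Subgroup.closure S = ⊤)
    {g s : G} (hs : s ∈ S) : wordLength S g ≤ wordLength S (g * s) + 1 := by
  have := wordLength_mul_le hsymm htop (g * s) s⁻¹
  simpa using le_trans this (by
    have := wordLength_le_one (hsymm s hs)
    omega)

end WordLength


namespace DeadEnd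
open FreeGroup

variable {X : Type*} [DecidableEq X]

/-- single letter as a group element -/
abbrev lett (ℓ : X × Bool) : FreeGroup X := FreeGroup.mk [ℓ]

lemma toWord_lett (ℓ : X × Bool) : (lett ℓ).toWord = [ℓ] := by
  simp [lett, toWord_mk, reduce_singleton]

lemma invRev_singleton (ℓ : X × Bool) : invRev [ℓ] = [(ℓ.1, !ℓ.2)] := by
  simp [invRev]

lemma lett_inv (ℓ : X × Bool) : (lett ℓ)⁻¹ = lett (ℓ.1, !ℓ.2) := by
  rw [lett, inv_mk, invRev_singleton]

lemma norm_toWord (x : FreeGroup X) : norm x = x.toWord.length := rfl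

lemma mem_freeGenSet_iff {s : FreeGroup X} : s ∈ freeGenSet X ↔ ∃ ℓ, s = lett ℓ := by
  constructor
  · rintro ⟨a, h | h⟩
    · exact ⟨(a, true), h⟩
    · refine ⟨(a, false), ?_⟩
      rw [h, FreeGroup.of, lett_inv]
      rfl
  · rintro ⟨⟨a, b⟩, rfl⟩
    cases b
    · refine ⟨a, Or.inr ?_⟩
      rw [FreeGroup.of, lett_inv]
      rfl
    · exact ⟨a, Or.inl rfl⟩

lemma freeGenSet_symm {s : FreeGroup X} (hs : s ∈ freeGenSet X) : s⁻¹ ∈ freeGenSet X := by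
  rw [mem_freeGenSet_iff] at hs ⊢
  obtain ⟨ℓ, rfl⟩ := hs
  exact ⟨_, lett_inv ℓ⟩

/-- reduce of a cons, given the tail is reduced. -/
lemma reduce_eq_self_of_eq {w : List (X × Bool)} (h : reduce w = w) :
    ∀ n, reduce (w.take n) = w.take n := by
  induction w with
  | nil => intro n; simp
  | cons a t ih =>
    intro n
    -- first, reduce t = t
    have ht : reduce t = t := by
      rcases hr : reduce t with _ | ⟨hd, tl⟩
      · have : reduce (a :: t) = [a] := by rw [reduce.cons, hr]
        rw [h] at this
        have : t = [] := by injection this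
        rw [this, hr.symm, this]
      · by_cases hc : a.1 = hd.1 ∧ a.2 = !hd.2
        · exfalso
          have : reduce (a :: t) = tl := by
            rw [reduce.cons, hr]; simp [hc]
          rw [h] at this
          have hlen := FreeGroup.Red.length_le (FreeGroup.reduce.red (L := t))
          rw [hr] at hlen
          have : (a :: t).length = tl.length := by rw [this]
          simp at this hlen
          omega
        · have h2 : reduce (a :: t) = a :: hd :: tl := by
            rw [reduce.cons, hr]; simp [hc]
          rw [h] at h2
          have : t = hd :: tl := by injection h2
          rw [this, ← hr, this]
    match n with
    | 0 => simp
    | (m+1) =>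
      have iht := ih ht m
      simp only [List.take_succ_cons]
      rcases hr : (t.take m) with _ | ⟨hd', tl'⟩
      · rfl
      · have hhd : t.head? = some hd' := by
          cases t with
          | nil => simp at hr
          | cons b t' =>
            cases m with
            | zero => simp at hr
            | succ k => simp at hr; simp [hr.1]
        -- head of t is hd'
        cases t with
        | nil => simp at hhd
        | cons b t' =>
          have hb : b = hd' := by simpa using hhd
          subst hb
          -- a does not cancel with b: since reduce (a :: b :: t') = a :: b :: t'
          have hnc : ¬(a.1 = b.1 ∧ a.2 = !b.2) := by
            intro hc
            have htr : reduce (b :: t') = b :: t' := ht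
            have : reduce (a :: b :: t') = t' := by
              rw [reduce.cons, htr]; simp [hc]
            rw [h] at this
            have : (a :: b :: t').length = t'.length := by rw [this]
            simp at this
            omega
          have iht' : reduce (b :: tl') = b :: tl' := by rw [← hr]; exact iht
          rw [reduce.cons, iht']
          simp [hnc]

lemma reduce_toWord_take (x : FreeGroup X) (n : ℕ) :
    reduce (x.toWord.take n) = x.toWord.take n :=
  reduce_eq_self_of_eq (reduce_toWord x) n

lemma toWord_mk_take (x : FreeGroup X) (n : ℕ) :
    (mk (x.toWord.take n)).toWord = x.toWord.take n := by
  rw [toWord_mk, reduce_toWord_take]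

lemma norm_mk_take (x : FreeGroup X) {i : ℕ} (hi : i ≤ x.toWord.length) :
    norm (mk (x.toWord.take i)) = i := by
  rw [norm_toWord, toWord_mk_take, List.length_take]
  omega

lemma invRev_cons (m : X × Bool) (L : List (X × Bool)) :
    invRev (m :: L) = invRev L ++ [(m.1, !m.2)] := by
  simp [invRev]

lemma invRev_append_single (w : List (X × Bool)) (ℓ : X × Bool) :
    invRev (w ++ [ℓ]) = (ℓ.1, !ℓ.2) :: invRev w := by
  simp [invRev]

lemma mul_lett_eq_mk (x : FreeGroup X) (ℓ : X × Bool) :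
    x * lett ℓ = mk (x.toWord ++ [ℓ]) := by
  conv_lhs => rw [← mk_toWord (x := x)]
  rw [lett, mul_mk]

lemma mul_lett_cases (x : FreeGroup X) (ℓ : X × Bool) :
    (x * lett ℓ).toWord = x.toWord ++ [ℓ] ∨
    x.toWord = (x * lett ℓ).toWord ++ [(ℓ.1, !ℓ.2)] := by
  have hx : (x * lett ℓ).toWord = reduce (x.toWord ++ [ℓ]) := by
    rw [mul_lett_eq_mk, toWord_mk]
  set w := x.toWord with hwdef
  have hred : reduce w = w := reduce_toWord x
  have hredr : reduce (invRev w) = invRev w := by rw [reduce_invRev, hred]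
  have key : reduce (w ++ [ℓ]) = invRev (reduce ((ℓ.1, !ℓ.2) :: invRev w)) := by
    rw [← invRev_append_single, reduce_invRev, invRev_invRev]
  rcases hr : invRev w with _ | ⟨hd, tl⟩
  · left
    have hw0 : w = [] := by
      have := congrArg List.length hr
      simp [invRev_length] at this
      exact this
    rw [hx, hw0]
    rfl
  · by_cases hc : (ℓ.1, !ℓ.2).1 = hd.1 ∧ (ℓ.1, !ℓ.2).2 = !hd.2
    · right
      have hredr' : reduce (hd :: tl) = hd :: tl := by rw [← hr]; exact hredr
      have hrtl : reduce ((ℓ.1, !ℓ.2) :: invRev w) = tl := by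
        have h2 : ℓ.2 = hd.2 := by simpa using hc.2
        have h1 : ℓ.1 = hd.1 := hc.1
        rw [hr, reduce.cons, hredr']
        simp [h1, h2]
      have hx2 : (x * lett ℓ).toWord = invRev tl := by
        rw [hx, key, hrtl]
      have hhd : hd = (ℓ.1, ℓ.2) := by
        obtain ⟨h1, h2⟩ := hc
        simp at h1 h2
        ext
        · exact h1.symm
        · simp [h2]
      have hwrec : w = invRev tl ++ [(ℓ.1, !ℓ.2)] := by
        have : invRev (invRev w) = w := invRev_invRev
        rw [← this, hr, hhd]
        simp [invRev]
      rw [hx2, hwrec]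
    · left
      have hredr' : reduce (hd :: tl) = hd :: tl := by rw [← hr]; exact hredr
      have hrtl : reduce ((ℓ.1, !ℓ.2) :: invRev w) = (ℓ.1, !ℓ.2) :: hd :: tl := by
        rw [hr, reduce.cons, hredr']
        simp only [if_neg hc]
      rw [hx, key, hrtl, invRev_cons, ← hr, invRev_invRev]
      simp

lemma geodEdges_one_def (v : FreeGroup X) : geodEdges 1 v =
    {e | ∃ i < v.toWord.length,
      e = s(mk (v.toWord.take i), mk (v.toWord.take (i + 1)))} := by
  simp [geodEdges]

lemma mem_geodEdges_iff {u : FreeGroup X} {ℓ : X × Bool} {h : FreeGroup X}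
    (hw : (u * lett ℓ).toWord = u.toWord ++ [ℓ]) :
    s(u, u * lett ℓ) ∈ geodEdges 1 h ↔ (u * lett ℓ).toWord <+: h.toWord := by
  rw [geodEdges_one_def]
  constructor
  · rintro ⟨i, hi, he⟩
    rw [Sym2.eq_iff] at he
    have hlen : (u * lett ℓ).toWord.length = u.toWord.length + 1 := by
      rw [hw]; simp
    rcases he with ⟨h1, h2⟩ | ⟨h1, h2⟩
    · have e1 : u.toWord = h.toWord.take i := by rw [h1, toWord_mk_take]
      have e2 : (u * lett ℓ).toWord = h.toWord.take (i + 1) := by rw [h2, toWord_mk_take]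
      rw [e2]
      exact List.take_prefix _ _
    · exfalso
      have e1 : u.toWord = h.toWord.take (i + 1) := by rw [h1, toWord_mk_take]
      have e2 : (u * lett ℓ).toWord = h.toWord.take i := by rw [h2, toWord_mk_take]
      have l1 := congrArg List.length e1
      have l2 := congrArg List.length e2
      rw [List.length_take] at l1 l2
      omega
  · intro hp
    obtain ⟨t, ht⟩ := hp
    have hlen : u.toWord.length + 1 ≤ h.toWord.length := by
      rw [← ht]
      simp [hw]
    refine ⟨u.toWord.length, by omega, ?_⟩
    have e1 : h.toWord.take u.toWord.length = u.toWord := by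
      rw [← ht, hw, List.append_assoc, List.take_append_of_le_length (by simp),
        List.take_length]
    have e2 : h.toWord.take (u.toWord.length + 1) = (u * lett ℓ).toWord := by
      rw [← ht, List.take_append_of_le_length (by rw [hw]; simp), hw]
      simp
    rw [e1, e2, mk_toWord, mk_toWord]

lemma mem_geodEdges_iff' {u : FreeGroup X} {ℓ : X × Bool} {h : FreeGroup X}
    (hw : u.toWord = (u * lett ℓ).toWord ++ [(ℓ.1, !ℓ.2)]) :
    s(u, u * lett ℓ) ∈ geodEdges 1 h ↔ u.toWord <+: h.toWord := by
  have h1 : (u * lett ℓ) * lett (ℓ.1, !ℓ.2) = u := by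
    rw [← lett_inv, mul_inv_cancel_right]
  have h2 : ((u * lett ℓ) * lett (ℓ.1, !ℓ.2)).toWord
      = (u * lett ℓ).toWord ++ [(ℓ.1, !ℓ.2)] := by rw [h1, ← hw]
  have key := mem_geodEdges_iff (h := h) h2
  rw [h1] at key
  rw [← key, Sym2.eq_swap]

lemma not_mem_geodEdges_self {x : FreeGroup X} {ℓ : X × Bool}
    (hw : (x * lett ℓ).toWord = x.toWord ++ [ℓ]) :
    s(x, x * lett ℓ) ∉ geodEdges 1 x := by
  rw [mem_geodEdges_iff hw]
  intro hp
  have := hp.length_le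
  rw [hw] at this
  simp at this

lemma geodEdges_mul_lett_eq {x : FreeGroup X} {ℓ : X × Bool}
    (hw : (x * lett ℓ).toWord = x.toWord ++ [ℓ]) :
    geodEdges 1 (x * lett ℓ) = geodEdges 1 x ∪ {s(x, x * lett ℓ)} := by
  have hxe : x * lett ℓ = mk (x.toWord ++ [ℓ]) := mul_lett_eq_mk x ℓ
  ext e
  rw [geodEdges_one_def, geodEdges_one_def, hw]
  simp only [Set.mem_setOf_eq, Set.mem_union, Set.mem_singleton_iff, List.length_append,
    List.length_singleton]
  constructor
  · rintro ⟨i, hi, rfl⟩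
    rcases Nat.lt_or_ge i x.toWord.length with hlt | hge
    · left
      refine ⟨i, hlt, ?_⟩
      rw [List.take_append_of_le_length (by omega), List.take_append_of_le_length (by omega)]
    · right
      have hieq : i = x.toWord.length := by omega
      subst hieq
      rw [List.take_append_of_le_length le_rfl, List.take_length,
        List.take_of_length_le (by simp), ← hxe, mk_toWord]
  · rintro (⟨i, hi, rfl⟩ | rfl)
    · refine ⟨i, by omega, ?_⟩
      rw [List.take_append_of_le_length (by omega), List.take_append_of_le_length (by omega)]
    · refine ⟨x.toWord.length, by omega, ?_⟩
      rw [List.take_append_of_le_length le_rfl, List.take_length,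
        List.take_of_length_le (by simp), ← hxe, mk_toWord]

lemma geodEdges_eq_range (v : FreeGroup X) :
    geodEdges 1 v = Set.range (fun i : Fin v.toWord.length =>
      s(mk (v.toWord.take (i : ℕ)), mk (v.toWord.take ((i : ℕ) + 1)))) := by
  rw [geodEdges_one_def]
  ext e
  simp only [Set.mem_setOf_eq, Set.mem_range]
  constructor
  · rintro ⟨i, hi, rfl⟩; exact ⟨⟨i, hi⟩, rfl⟩
  · rintro ⟨⟨i, hi⟩, rfl⟩; exact ⟨i, hi, rfl⟩

lemma geodEdges_finite (v : FreeGroup X) : (geodEdges 1 v).Finite := by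
  rw [geodEdges_eq_range]; exact Set.finite_range _

lemma ncard_geodEdges (v : FreeGroup X) : (geodEdges 1 v).ncard = norm v := by
  rw [geodEdges_eq_range, ← Nat.card_coe_set_eq,
    Nat.card_range_of_injective ?_, Nat.card_eq_fintype_card, Fintype.card_fin, norm_toWord]
  intro i j hij
  rw [Sym2.eq_iff] at hij
  have ni : ∀ k : ℕ, k ≤ v.toWord.length → norm (mk (v.toWord.take k)) = k :=
    fun k hk => norm_mk_take v hk
  have hi := i.2
  have hj := j.2
  rcases hij with ⟨h1, h2⟩ | ⟨h1, h2⟩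
  · have := congrArg FreeGroup.norm h1
    rw [ni _ (by omega), ni _ (by omega)] at this
    exact Fin.ext this
  · have e1 := congrArg FreeGroup.norm h1
    have e2 := congrArg FreeGroup.norm h2
    rw [ni _ (by omega), ni _ (by omega)] at e1
    rw [ni _ (by omega), ni _ (by omega)] at e2
    omega

lemma geodEdges_one_one : geodEdges 1 (1 : FreeGroup X) = ∅ := by
  rw [geodEdges_one_def]
  ext e
  simp [toWord_one]


section WreathStuff

variable {X A : Type*} [DecidableEq X] [Group A]

open SemidirectProduct

/-- The finiteness of the support of `f`. -/
lemma suppFin (f : FinSuppSubgroup A (FreeGroup X)) :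
    (Function.mulSupport (f : FreeGroup X → A)).Finite := f.2

/-- Sum of word lengths of the lamp values. -/
noncomputable def lampSum (SA : Set A) (f : FinSuppSubgroup A (FreeGroup X)) : ℕ :=
  ∑ y ∈ (suppFin f).toFinset, wordLength SA ((f : FreeGroup X → A) y)

lemma lampSum_eq_sum (SA : Set A) (f : FinSuppSubgroup A (FreeGroup X))
    (T : Finset (FreeGroup X)) (hT : Function.mulSupport (f : FreeGroup X → A) ⊆ ↑T) :
    lampSum SA f = ∑ y ∈ T, wordLength SA ((f : FreeGroup X → A) y) := by
  refine Finset.sum_subset ?_ ?_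
  · intro y hy
    rw [Set.Finite.mem_toFinset] at hy
    exact hT hy
  · intro y _ hy
    rw [Set.Finite.mem_toFinset, Function.mem_mulSupport, not_not] at hy
    rw [hy, wordLength_one]

/-- The edge set associated to `(f, x)`. -/
def edgeSet (f : FinSuppSubgroup A (FreeGroup X)) (x : FreeGroup X) :
    Set (Sym2 (FreeGroup X)) :=
  geodUnion 1 (Function.mulSupport (f : FreeGroup X → A)) ∪ geodEdges 1 x

lemma geodUnion_finite (f : FinSuppSubgroup A (FreeGroup X)) :
    (geodUnion 1 (Function.mulSupport (f : FreeGroup X → A))).Finite :=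
  Set.Finite.biUnion (suppFin f) fun h _ => geodEdges_finite h

lemma edgeSet_finite (f : FinSuppSubgroup A (FreeGroup X)) (x : FreeGroup X) :
    (edgeSet f x).Finite :=
  (geodUnion_finite f).union (geodEdges_finite x)

lemma norm_le_ncard_edgeSet (f : FinSuppSubgroup A (FreeGroup X)) (x : FreeGroup X) :
    FreeGroup.norm x ≤ (edgeSet f x).ncard := by
  rw [← ncard_geodEdges (X := X) x]
  exact Set.ncard_le_ncard Set.subset_union_right (edgeSet_finite f x)

/-- The candidate length function. -/
noncomputable def phi (SA : Set A) (g : Wreath A (FreeGroup X)) : ℕ :=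
  lampSum SA g.left + 2 * (edgeSet g.left g.right).ncard - FreeGroup.norm g.right

lemma mulSupport_one' :
    Function.mulSupport ((1 : FinSuppSubgroup A (FreeGroup X)) : FreeGroup X → A) = ∅ := by
  ext y
  simp [Function.mem_mulSupport]

lemma phi_one (SA : Set A) : phi SA (1 : Wreath A (FreeGroup X)) = 0 := by
  unfold phi
  rw [one_left, one_right]
  have h1 : lampSum SA (1 : FinSuppSubgroup A (FreeGroup X)) = 0 := by
    unfold lampSum
    apply Finset.sum_eq_zero
    intro y hy
    rw [Set.Finite.mem_toFinset, mulSupport_one'] at hy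
    exact absurd hy (Set.notMem_empty y)
  have h2 : edgeSet (1 : FinSuppSubgroup A (FreeGroup X)) (1 : FreeGroup X) = ∅ := by
    unfold edgeSet geodUnion
    rw [mulSupport_one', geodEdges_one_one]
    simp
  rw [h1, h2]
  simp [FreeGroup.norm_one]

lemma mk_mul_inr (f : FinSuppSubgroup A (FreeGroup X)) (x t : FreeGroup X) :
    (⟨f, x⟩ : Wreath A (FreeGroup X)) * inr t = ⟨f, x * t⟩ := by
  rw [mul_def]
  congr 1
  · show f * (lampAction A (FreeGroup X) x) 1 = f
    rw [_root_.map_one, mul_one]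

lemma mk_mul_inl_left_apply (f : FinSuppSubgroup A (FreeGroup X)) (x : FreeGroup X) (a : A)
    (y : FreeGroup X) :
    ((((⟨f, x⟩ : Wreath A (FreeGroup X)) * inl (lampSingle A (FreeGroup X) a)).left :
        FreeGroup X → A)) y
      = (f : FreeGroup X → A) y * (if y = x then a else 1) := by
  rw [mul_left, left_inl]
  have key : (((lampAction A (FreeGroup X)) x (lampSingle A (FreeGroup X) a) :
      FinSuppSubgroup A (FreeGroup X)) : FreeGroup X → A) y
      = (lampSingle A (FreeGroup X) a : FreeGroup X → A) (x⁻¹ * y) := rfl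
  rw [MulMemClass.coe_mul, Pi.mul_apply, key]
  congr 1
  by_cases h : y = x
  · subst h
    rw [if_pos rfl, inv_mul_cancel]
    simp [lampSingle]
  · rw [if_neg h]
    have hne : x⁻¹ * y ≠ 1 := by
      rw [Ne, inv_mul_eq_one]
      exact fun hc => h hc.symm
    simp [lampSingle, hne]

lemma mk_mul_inl_right (f : FinSuppSubgroup A (FreeGroup X)) (x : FreeGroup X) (a : A) :
    (((⟨f, x⟩ : Wreath A (FreeGroup X)) * inl (lampSingle A (FreeGroup X) a)).right) = x := by
  rw [mul_right, right_inl, mul_one]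

end WreathStuff

section Moves

variable {X A : Type*} [DecidableEq X] [Group A]

open SemidirectProduct

lemma edgeSet_congr_aux {f f' : FinSuppSubgroup A (FreeGroup X)} {x : FreeGroup X}
    (h : ∀ y, y ≠ x → (f : FreeGroup X → A) y = (f' : FreeGroup X → A) y) :
    edgeSet f x ⊆ edgeSet f' x := by
  intro e he
  rcases he with he | he
  · rw [geodUnion, Set.mem_iUnion₂] at he
    obtain ⟨h0, hh0, he⟩ := he
    by_cases hx : h0 = x
    · subst hx
      exact Or.inr he
    · left
      rw [geodUnion, Set.mem_iUnion₂]
      refine ⟨h0, ?_, he⟩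
      rw [Function.mem_mulSupport, ← h h0 hx]
      exact hh0
  · exact Or.inr he

lemma edgeSet_congr {f f' : FinSuppSubgroup A (FreeGroup X)} {x : FreeGroup X}
    (h : ∀ y, y ≠ x → (f : FreeGroup X → A) y = (f' : FreeGroup X → A) y) :
    edgeSet f x = edgeSet f' x :=
  Set.Subset.antisymm (edgeSet_congr_aux h) (edgeSet_congr_aux (fun y hy => (h y hy).symm))

lemma norm_up {x : FreeGroup X} {ℓ : X × Bool}
    (hw : (x * lett ℓ).toWord = x.toWord ++ [ℓ]) :
    FreeGroup.norm (x * lett ℓ) = FreeGroup.norm x + 1 := by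
  rw [norm_toWord, norm_toWord, hw, List.length_append, List.length_singleton]

lemma edgeSet_up_mem {f : FinSuppSubgroup A (FreeGroup X)} {x : FreeGroup X} {ℓ : X × Bool}
    (hw : (x * lett ℓ).toWord = x.toWord ++ [ℓ])
    (he : s(x, x * lett ℓ) ∈ edgeSet f x) :
    edgeSet f (x * lett ℓ) = edgeSet f x := by
  unfold edgeSet
  rw [geodEdges_mul_lett_eq hw, ← Set.union_assoc]
  exact Set.union_eq_self_of_subset_right (Set.singleton_subset_iff.2 he)

lemma edgeSet_up_not_mem {f : FinSuppSubgroup A (FreeGroup X)} {x : FreeGroup X} {ℓ : X × Bool}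
    (hw : (x * lett ℓ).toWord = x.toWord ++ [ℓ]) :
    edgeSet f (x * lett ℓ) = edgeSet f x ∪ {s(x, x * lett ℓ)} := by
  unfold edgeSet
  rw [geodEdges_mul_lett_eq hw, ← Set.union_assoc]

lemma phi_up_mem (SA : Set A) {f : FinSuppSubgroup A (FreeGroup X)} {x : FreeGroup X}
    {ℓ : X × Bool} (hw : (x * lett ℓ).toWord = x.toWord ++ [ℓ])
    (he : s(x, x * lett ℓ) ∈ geodUnion 1 (Function.mulSupport (f : FreeGroup X → A))) :
    phi SA (⟨f, x * lett ℓ⟩ : Wreath A (FreeGroup X)) + 1 = phi SA ⟨f, x⟩ := by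
  have hee : s(x, x * lett ℓ) ∈ edgeSet f x := Or.inl he
  have hE : edgeSet f (x * lett ℓ) = edgeSet f x := edgeSet_up_mem hw hee
  have hn : FreeGroup.norm (x * lett ℓ) = FreeGroup.norm x + 1 := norm_up hw
  have hle : FreeGroup.norm (x * lett ℓ) ≤ (edgeSet f (x * lett ℓ)).ncard :=
    norm_le_ncard_edgeSet f _
  unfold phi
  show lampSum SA f + 2 * (edgeSet f (x * lett ℓ)).ncard - FreeGroup.norm (x * lett ℓ) + 1
      = lampSum SA f + 2 * (edgeSet f x).ncard - FreeGroup.norm x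
  rw [hE] at hle ⊢
  omega

lemma phi_up_not_mem (SA : Set A) {f : FinSuppSubgroup A (FreeGroup X)} {x : FreeGroup X}
    {ℓ : X × Bool} (hw : (x * lett ℓ).toWord = x.toWord ++ [ℓ])
    (he : s(x, x * lett ℓ) ∉ geodUnion 1 (Function.mulSupport (f : FreeGroup X → A))) :
    phi SA (⟨f, x * lett ℓ⟩ : Wreath A (FreeGroup X)) = phi SA ⟨f, x⟩ + 1 := by
  have hee : s(x, x * lett ℓ) ∉ edgeSet f x := by
    intro hc
    rcases hc with hc | hc
    · exact he hc
    · exact not_mem_geodEdges_self hw hc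
  have hE : edgeSet f (x * lett ℓ) = edgeSet f x ∪ {s(x, x * lett ℓ)} :=
    edgeSet_up_not_mem hw
  have hC : (edgeSet f (x * lett ℓ)).ncard = (edgeSet f x).ncard + 1 := by
    rw [hE, Set.union_singleton, Set.ncard_insert_of_notMem hee (edgeSet_finite f x)]
  have hn : FreeGroup.norm (x * lett ℓ) = FreeGroup.norm x + 1 := norm_up hw
  have hle : FreeGroup.norm x ≤ (edgeSet f x).ncard := norm_le_ncard_edgeSet f x
  unfold phi
  show lampSum SA f + 2 * (edgeSet f (x * lett ℓ)).ncard - FreeGroup.norm (x * lett ℓ)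
      = lampSum SA f + 2 * (edgeSet f x).ncard - FreeGroup.norm x + 1
  omega

lemma down_setup {x : FreeGroup X} {ℓ : X × Bool}
    (hw : x.toWord = (x * lett ℓ).toWord ++ [(ℓ.1, !ℓ.2)]) :
    ((x * lett ℓ) * lett (ℓ.1, !ℓ.2) = x) ∧
    (((x * lett ℓ) * lett (ℓ.1, !ℓ.2)).toWord = (x * lett ℓ).toWord ++ [(ℓ.1, !ℓ.2)]) := by
  have h1 : (x * lett ℓ) * lett (ℓ.1, !ℓ.2) = x := by
    rw [← lett_inv, mul_inv_cancel_right]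
  exact ⟨h1, by rw [h1, ← hw]⟩

lemma phi_down_mem (SA : Set A) {f : FinSuppSubgroup A (FreeGroup X)} {x : FreeGroup X}
    {ℓ : X × Bool} (hw : x.toWord = (x * lett ℓ).toWord ++ [(ℓ.1, !ℓ.2)])
    (he : s(x, x * lett ℓ) ∈ geodUnion 1 (Function.mulSupport (f : FreeGroup X → A))) :
    phi SA (⟨f, x * lett ℓ⟩ : Wreath A (FreeGroup X)) = phi SA ⟨f, x⟩ + 1 := by
  obtain ⟨h1, h2⟩ := down_setup hw
  have he' : s(x * lett ℓ, (x * lett ℓ) * lett (ℓ.1, !ℓ.2)) ∈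
      geodUnion 1 (Function.mulSupport (f : FreeGroup X → A)) := by
    rw [h1, Sym2.eq_swap]
    exact he
  have hee : s(x * lett ℓ, (x * lett ℓ) * lett (ℓ.1, !ℓ.2)) ∈ edgeSet f (x * lett ℓ) :=
    Or.inl he'
  have hE : edgeSet f x = edgeSet f (x * lett ℓ) := by
    conv_lhs => rw [← h1]
    exact edgeSet_up_mem h2 hee
  have hn : FreeGroup.norm x = FreeGroup.norm (x * lett ℓ) + 1 := by
    conv_lhs => rw [← h1]
    exact norm_up h2
  have hle : FreeGroup.norm x ≤ (edgeSet f x).ncard := norm_le_ncard_edgeSet f x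
  unfold phi
  show lampSum SA f + 2 * (edgeSet f (x * lett ℓ)).ncard - FreeGroup.norm (x * lett ℓ)
      = lampSum SA f + 2 * (edgeSet f x).ncard - FreeGroup.norm x + 1
  rw [← hE] at *
  omega

lemma phi_down_not_mem (SA : Set A) {f : FinSuppSubgroup A (FreeGroup X)} {x : FreeGroup X}
    {ℓ : X × Bool} (hw : x.toWord = (x * lett ℓ).toWord ++ [(ℓ.1, !ℓ.2)])
    (he : s(x, x * lett ℓ) ∉ geodUnion 1 (Function.mulSupport (f : FreeGroup X → A))) :
    phi SA (⟨f, x * lett ℓ⟩ : Wreath A (FreeGroup X)) + 1 = phi SA ⟨f, x⟩ := by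
  obtain ⟨h1, h2⟩ := down_setup hw
  have he' : s(x * lett ℓ, (x * lett ℓ) * lett (ℓ.1, !ℓ.2)) ∉
      geodUnion 1 (Function.mulSupport (f : FreeGroup X → A)) := by
    rw [h1, Sym2.eq_swap]
    exact he
  have hee : s(x * lett ℓ, (x * lett ℓ) * lett (ℓ.1, !ℓ.2)) ∉ edgeSet f (x * lett ℓ) := by
    intro hc
    rcases hc with hc | hc
    · exact he' hc
    · exact not_mem_geodEdges_self h2 hc
  have hE : edgeSet f x = edgeSet f (x * lett ℓ) ∪
      {s(x * lett ℓ, (x * lett ℓ) * lett (ℓ.1, !ℓ.2))} := by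
    conv_lhs => rw [← h1]
    exact edgeSet_up_not_mem h2
  have hC : (edgeSet f x).ncard = (edgeSet f (x * lett ℓ)).ncard + 1 := by
    rw [hE, Set.union_singleton, Set.ncard_insert_of_notMem hee (edgeSet_finite f _)]
  have hn : FreeGroup.norm x = FreeGroup.norm (x * lett ℓ) + 1 := by
    conv_lhs => rw [← h1]
    exact norm_up h2
  have hle : FreeGroup.norm (x * lett ℓ) ≤ (edgeSet f (x * lett ℓ)).ncard :=
    norm_le_ncard_edgeSet f _
  unfold phi
  show lampSum SA f + 2 * (edgeSet f (x * lett ℓ)).ncard - FreeGroup.norm (x * lett ℓ) + 1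
      = lampSum SA f + 2 * (edgeSet f x).ncard - FreeGroup.norm x
  omega

lemma edgeSet_inl (f : FinSuppSubgroup A (FreeGroup X)) (x : FreeGroup X) (a : A) :
    edgeSet (((⟨f, x⟩ : Wreath A (FreeGroup X)) * inl (lampSingle A (FreeGroup X) a)).left) x
      = edgeSet f x := by
  apply edgeSet_congr
  intro y hy
  rw [mk_mul_inl_left_apply, if_neg hy, mul_one]

lemma lampSum_inl (SA : Set A) (f : FinSuppSubgroup A (FreeGroup X)) (x : FreeGroup X) (a : A) :
    lampSum SA (((⟨f, x⟩ : Wreath A (FreeGroup X)) * inl (lampSingle A (FreeGroup X) a)).left)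
        + wordLength SA ((f : FreeGroup X → A) x)
      = lampSum SA f + wordLength SA ((f : FreeGroup X → A) x * a) := by
  set f' := ((⟨f, x⟩ : Wreath A (FreeGroup X)) * inl (lampSingle A (FreeGroup X) a)).left with hf'
  set T : Finset (FreeGroup X) :=
    ((suppFin f).toFinset ∪ (suppFin f').toFinset) ∪ {x} with hT
  have hTf : Function.mulSupport (f : FreeGroup X → A) ⊆ ↑T := by
    intro y hy
    simp only [hT, Finset.coe_union, Set.mem_union, Finset.coe_singleton]
    exact Or.inl (Or.inl ((suppFin f).mem_toFinset.2 hy))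
  have hTf' : Function.mulSupport (f' : FreeGroup X → A) ⊆ ↑T := by
    intro y hy
    simp only [hT, Finset.coe_union, Set.mem_union, Finset.coe_singleton]
    exact Or.inl (Or.inr ((suppFin f').mem_toFinset.2 hy))
  have hxT : x ∈ T := by
    simp [hT]
  rw [lampSum_eq_sum SA f T hTf, lampSum_eq_sum SA f' T hTf']
  rw [← Finset.sum_erase_add T _ hxT, ← Finset.sum_erase_add T
    (fun y => wordLength SA ((f : FreeGroup X → A) y)) hxT]
  have hsame : ∑ y ∈ T.erase x, wordLength SA ((f' : FreeGroup X → A) y)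
      = ∑ y ∈ T.erase x, wordLength SA ((f : FreeGroup X → A) y) := by
    refine Finset.sum_congr rfl ?_
    intro y hy
    have hyx : y ≠ x := (Finset.mem_erase.1 hy).1
    rw [hf', mk_mul_inl_left_apply, if_neg hyx, mul_one]
  have hfx : (f' : FreeGroup X → A) x = (f : FreeGroup X → A) x * a := by
    rw [hf', mk_mul_inl_left_apply, if_pos rfl]
  rw [hsame, hfx]
  omega

lemma phi_inl (SA : Set A) (f : FinSuppSubgroup A (FreeGroup X)) (x : FreeGroup X) (a : A) :
    phi SA ((⟨f, x⟩ : Wreath A (FreeGroup X)) * inl (lampSingle A (FreeGroup X) a))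
        + wordLength SA ((f : FreeGroup X → A) x)
      = phi SA (⟨f, x⟩ : Wreath A (FreeGroup X))
        + wordLength SA ((f : FreeGroup X → A) x * a) := by
  set g' := (⟨f, x⟩ : Wreath A (FreeGroup X)) * inl (lampSingle A (FreeGroup X) a) with hg'
  have hright : g'.right = x := mk_mul_inl_right f x a
  have hE : edgeSet g'.left x = edgeSet f x := edgeSet_inl f x a
  have hL := lampSum_inl SA f x a
  rw [← hg'] at hL
  have hle : FreeGroup.norm x ≤ (edgeSet f x).ncard := norm_le_ncard_edgeSet f x
  unfold phi
  rw [hright, hE]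
  show lampSum SA g'.left + 2 * (edgeSet f x).ncard - FreeGroup.norm x
        + wordLength SA ((f : FreeGroup X → A) x)
      = lampSum SA f + 2 * (edgeSet f x).ncard - FreeGroup.norm x
        + wordLength SA ((f : FreeGroup X → A) x * a)
  omega

end Moves

section Generation

variable {X A : Type*} [DecidableEq X] [Group A]

open SemidirectProduct

lemma lampSingle_mul (a b : A) :
    lampSingle A (FreeGroup X) a * lampSingle A (FreeGroup X) b
      = lampSingle A (FreeGroup X) (a * b) := by
  apply Subtype.ext
  funext y
  by_cases h : y = (1 : FreeGroup X)
  · subst h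
    simp [lampSingle, MulMemClass.coe_mul]
  · simp [lampSingle, h, MulMemClass.coe_mul]

lemma lampSingle_one : lampSingle A (FreeGroup X) 1 = 1 := by
  apply Subtype.ext
  funext y
  by_cases h : y = (1 : FreeGroup X)
  · subst h
    simp [lampSingle]
  · simp [lampSingle, h]

lemma lampSingle_inv (a : A) :
    (lampSingle A (FreeGroup X) a)⁻¹ = lampSingle A (FreeGroup X) a⁻¹ := by
  rw [eq_comm, eq_inv_iff_mul_eq_one, lampSingle_mul, inv_mul_cancel, lampSingle_one]

lemma stdGen_symm {SA : Set A} (hSA : IsSymmGen SA) :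
    ∀ s ∈ stdGen SA (freeGenSet X), s⁻¹ ∈ stdGen SA (freeGenSet X) := by
  rintro s (⟨a, ha, rfl⟩ | ⟨b, hb, rfl⟩)
  · left
    refine ⟨a⁻¹, hSA.symm a ha, ?_⟩
    show inl (lampSingle A (FreeGroup X) a⁻¹) = (inl (lampSingle A (FreeGroup X) a))⁻¹
    rw [← _root_.map_inv, lampSingle_inv]
  · right
    refine ⟨b⁻¹, freeGenSet_symm hb, ?_⟩
    show (inr b⁻¹ : Wreath A (FreeGroup X)) = (inr b)⁻¹
    rw [_root_.map_inv]

lemma inr_mem_closure {SA : Set A} (x : FreeGroup X) :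
    inr x ∈ Subgroup.closure (stdGen SA (freeGenSet X)) := by
  have h1 : Subgroup.closure (freeGenSet X)
      ≤ (Subgroup.closure (stdGen SA (freeGenSet X))).comap
          (inr : FreeGroup X →* Wreath A (FreeGroup X)) := by
    rw [Subgroup.closure_le]
    intro s hs
    exact Subgroup.subset_closure (Or.inr ⟨s, hs, rfl⟩)
  have h2 : Subgroup.closure (freeGenSet X) = (⊤ : Subgroup (FreeGroup X)) := by
    rw [eq_top_iff, ← FreeGroup.closure_range_of X]
    apply Subgroup.closure_mono
    rintro _ ⟨a, rfl⟩
    exact ⟨a, Or.inl rfl⟩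
  exact h1 (h2 ▸ Subgroup.mem_top x)

lemma inl_single_mem_closure {SA : Set A} (hSA : IsSymmGen SA) (a : A) :
    inl (lampSingle A (FreeGroup X) a)
      ∈ Subgroup.closure (stdGen SA (freeGenSet X)) := by
  let F : A →* Wreath A (FreeGroup X) :=
    { toFun := fun a => inl (lampSingle A (FreeGroup X) a)
      map_one' := by
        show inl (lampSingle A (FreeGroup X) (1 : A)) = 1
        rw [lampSingle_one, _root_.map_one]
      map_mul' := fun a b => by
        show inl (lampSingle A (FreeGroup X) (a * b))
            = inl (lampSingle A (FreeGroup X) a) * inl (lampSingle A (FreeGroup X) b)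
        rw [← lampSingle_mul, _root_.map_mul] }
  have h1 : Subgroup.closure SA ≤ (Subgroup.closure (stdGen SA (freeGenSet X))).comap F := by
    rw [Subgroup.closure_le]
    intro s hs
    exact Subgroup.subset_closure (Or.inl ⟨s, hs, rfl⟩)
  exact h1 (hSA.closure_eq_top ▸ Subgroup.mem_top a)

lemma inl_mem_closure {SA : Set A} (hSA : IsSymmGen SA)
    (f : FinSuppSubgroup A (FreeGroup X)) :
    inl f ∈ Subgroup.closure (stdGen SA (freeGenSet X)) := by
  have haut : ∀ (y : FreeGroup X) (a : A),
      inl ((lampAction A (FreeGroup X) y) (lampSingle A (FreeGroup X) a))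
        ∈ Subgroup.closure (stdGen SA (freeGenSet X)) := by
    intro y a
    rw [inl_aut]
    exact Subgroup.mul_mem _
      (Subgroup.mul_mem _ (inr_mem_closure y) (inl_single_mem_closure hSA a))
      (inr_mem_closure y⁻¹)
  suffices H : ∀ (T : Finset (FreeGroup X)) (f : FinSuppSubgroup A (FreeGroup X)),
      Function.mulSupport (f : FreeGroup X → A) ⊆ ↑T →
      inl f ∈ Subgroup.closure (stdGen SA (freeGenSet X)) by
    exact H (suppFin f).toFinset f (by rw [Set.Finite.coe_toFinset])
  intro T
  induction T using Finset.induction_on with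
  | empty =>
    intro f hf
    have : f = 1 := by
      apply Subtype.ext
      funext y
      by_contra hy
      exact absurd (hf hy) (by simp)
    rw [this, _root_.map_one]
    exact Subgroup.one_mem _
  | insert _ _ hns ih =>
    rename_i y T'
    intro f hf
    set d : A := (f : FreeGroup X → A) y with hd
    set σ : FinSuppSubgroup A (FreeGroup X) :=
      (lampAction A (FreeGroup X) y) (lampSingle A (FreeGroup X) d) with hσ
    have hσap : ∀ z, (σ : FreeGroup X → A) z = if z = y then d else 1 := by
      intro z
      have : (σ : FreeGroup X → A) z
          = (lampSingle A (FreeGroup X) d : FreeGroup X → A) (y⁻¹ * z) := rfl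
      rw [this]
      by_cases h : z = y
      · subst h
        rw [if_pos rfl, inv_mul_cancel]
        simp [lampSingle]
      · rw [if_neg h]
        have hne : y⁻¹ * z ≠ 1 := by
          rw [Ne, inv_mul_eq_one]
          exact fun hc => h hc.symm
        simp [lampSingle, hne]
    set f' : FinSuppSubgroup A (FreeGroup X) := f * σ⁻¹ with hf'
    have hf'ap : ∀ z, (f' : FreeGroup X → A) z
        = (f : FreeGroup X → A) z * ((if z = y then d else 1))⁻¹ := by
      intro z
      rw [hf', MulMemClass.coe_mul, Pi.mul_apply]
      congr 1
      rw [← hσap z]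
      rfl
    have hsupp : Function.mulSupport (f' : FreeGroup X → A) ⊆ ↑T' := by
      intro z hz
      rw [Function.mem_mulSupport] at hz
      by_cases h : z = y
      · exfalso
        apply hz
        rw [hf'ap, h, if_pos rfl, ← hd]
        exact mul_inv_cancel d
      · have : (f' : FreeGroup X → A) z = (f : FreeGroup X → A) z := by
          rw [hf'ap, if_neg h, inv_one, mul_one]
        rw [this] at hz
        have := hf hz
        simp only [Finset.coe_insert, Set.mem_insert_iff] at this
        rcases this with h1 | h1
        · exact absurd h1 h
        · exact h1
    have hcomp : f = f' * σ := by
      rw [hf', inv_mul_cancel_right]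
    rw [hcomp, _root_.map_mul]
    exact Subgroup.mul_mem _ (ih f' hsupp) (haut y d)

lemma stdGen_closure {SA : Set A} (hSA : IsSymmGen SA) :
    Subgroup.closure (stdGen SA (freeGenSet X)) = ⊤ := by
  rw [eq_top_iff]
  intro g _
  rw [← inl_left_mul_inr_right g]
  exact Subgroup.mul_mem _ (inl_mem_closure hSA g.left) (inr_mem_closure g.right)

end Generation

section Formula

variable {X A : Type*} [DecidableEq X] [Group A]

open SemidirectProduct

lemma phi_mul_le (SA : Set A) (hSA : IsSymmGen SA) (g : Wreath A (FreeGroup X)) :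
    ∀ s ∈ stdGen SA (freeGenSet X), phi SA (g * s) ≤ phi SA g + 1 := by
  obtain ⟨f, x⟩ := g
  rintro s (⟨a, ha, rfl⟩ | ⟨t, ht, rfl⟩)
  · show phi SA ((⟨f, x⟩ : Wreath A (FreeGroup X)) * inl (lampSingle A (FreeGroup X) a))
        ≤ phi SA (⟨f, x⟩ : Wreath A (FreeGroup X)) + 1
    have h1 := phi_inl SA f x a
    have h2 : wordLength SA ((f : FreeGroup X → A) x * a)
        ≤ wordLength SA ((f : FreeGroup X → A) x) + 1 := by
      calc wordLength SA ((f : FreeGroup X → A) x * a)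
          ≤ wordLength SA ((f : FreeGroup X → A) x) + wordLength SA a :=
            wordLength_mul_le hSA.symm hSA.closure_eq_top _ _
        _ ≤ _ := by have := wordLength_le_one ha; omega
    omega
  · obtain ⟨ℓ, rfl⟩ := mem_freeGenSet_iff.1 ht
    rw [mk_mul_inr]
    rcases mul_lett_cases x ℓ with hw | hw
    · by_cases he : s(x, x * lett ℓ) ∈
        geodUnion 1 (Function.mulSupport (f : FreeGroup X → A))
      · have := phi_up_mem SA hw he
        omega
      · have := phi_up_not_mem SA hw he
        omega
    · by_cases he : s(x, x * lett ℓ) ∈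
        geodUnion 1 (Function.mulSupport (f : FreeGroup X → A))
      · have := phi_down_mem SA hw he
        omega
      · have := phi_down_not_mem SA hw he
        omega

lemma phi_le_wordLength (SA : Set A) (hSA : IsSymmGen SA) (g : Wreath A (FreeGroup X)) :
    phi SA g ≤ wordLength (stdGen SA (freeGenSet X)) g := by
  obtain ⟨l, hl, hlen, hprod⟩ :=
    wordLength_spec (stdGen_symm hSA) (stdGen_closure hSA) g
  rw [← hlen, ← hprod]
  clear hlen hprod
  induction l using List.reverseRecOn with
  | nil =>
    simp only [List.prod_nil, List.length_nil]
    rw [phi_one]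
  | append_singleton l s ih =>
    have hs : s ∈ stdGen SA (freeGenSet X) := hl s (by simp)
    have hl' : ∀ z ∈ l, z ∈ stdGen SA (freeGenSet X) := fun z hz => hl z (by simp [hz])
    have h1 := phi_mul_le SA hSA l.prod s hs
    have h2 := ih hl'
    rw [List.prod_append, List.prod_singleton, List.length_append]
    simp only [List.length_singleton]
    omega

lemma descent (SA : Set A) (hSA : IsSymmGen SA) (f : FinSuppSubgroup A (FreeGroup X))
    (x : FreeGroup X) (hne : (⟨f, x⟩ : Wreath A (FreeGroup X)) ≠ 1) :
    ∃ s ∈ stdGen SA (freeGenSet X),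
      phi SA ((⟨f, x⟩ : Wreath A (FreeGroup X)) * s) + 1 ≤ phi SA ⟨f, x⟩ := by
  by_cases hfx : (f : FreeGroup X → A) x = 1
  · by_cases hcov : ∃ h : FreeGroup X, (f : FreeGroup X → A) h ≠ 1 ∧ x.toWord <+: h.toWord
    · obtain ⟨h, hh, hpre⟩ := hcov
      have hxh : x ≠ h := fun e => hh (e ▸ hfx)
      have hlt : x.toWord.length < h.toWord.length := by
        rcases Nat.lt_or_ge x.toWord.length h.toWord.length with h1 | h1
        · exact h1
        · exfalso
          apply hxh
          apply FreeGroup.toWord_injective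
          exact List.IsPrefix.eq_of_length_le hpre h1
      set ℓn := h.toWord[x.toWord.length]'hlt with hℓn
      have htake : x.toWord = h.toWord.take x.toWord.length := by
        rw [List.prefix_iff_eq_take] at hpre
        exact hpre
      have htake1 : x.toWord ++ [ℓn] = h.toWord.take (x.toWord.length + 1) := by
        conv_lhs => rw [htake]
        have := List.take_concat_get hlt
        rw [List.concat_eq_append] at this
        exact this
      have hw : (x * lett ℓn).toWord = x.toWord ++ [ℓn] := by
        rw [mul_lett_eq_mk, toWord_mk, htake1, reduce_toWord_take]
      have hmem : s(x, x * lett ℓn) ∈ geodEdges 1 h := by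
        rw [mem_geodEdges_iff hw, hw, htake1]
        exact List.take_prefix _ _
      have hgu : s(x, x * lett ℓn) ∈
          geodUnion 1 (Function.mulSupport (f : FreeGroup X → A)) := by
        rw [geodUnion, Set.mem_iUnion₂]
        exact ⟨h, hh, hmem⟩
      refine ⟨inr (lett ℓn), Or.inr ⟨lett ℓn, mem_freeGenSet_iff.2 ⟨ℓn, rfl⟩, rfl⟩, ?_⟩
      rw [mk_mul_inr]
      exact le_of_eq (phi_up_mem SA hw hgu)
    · have hx1 : x ≠ 1 := by
        rintro rfl
        apply hne
        have hf1 : f = 1 := by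
          apply Subtype.ext
          funext y
          by_contra hy
          refine hcov ⟨y, hy, ?_⟩
          rw [toWord_one]
          exact List.nil_prefix
        rw [hf1]
        rfl
      have hxw : x.toWord ≠ [] := fun e => hx1 (toWord_eq_nil_iff.1 e)
      obtain ⟨w', m, hwm⟩ := (List.eq_nil_or_concat x.toWord).resolve_left hxw
      rw [List.concat_eq_append] at hwm
      have hw'red : reduce w' = w' := by
        have : w' = x.toWord.take w'.length := by
          rw [hwm, List.take_append_of_le_length le_rfl, List.take_length]
        rw [this, reduce_toWord_take]
      have hx' : x * lett (m.1, !m.2) = mk w' := by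
        conv_lhs => rw [← mk_toWord (x := x), hwm, lett, mul_mk]
        have : w' ++ [m] ++ [(m.1, !m.2)] = w' ++ (m.1, m.2) :: (m.1, !m.2) :: [] := by
          simp
        rw [this]
        apply FreeGroup.reduce.exact
        rw [FreeGroup.reduce.Step.eq (FreeGroup.Red.Step.not (L₂ := []))]
        rw [List.append_nil]
      have htw : (x * lett (m.1, !m.2)).toWord = w' := by
        rw [hx', toWord_mk, hw'red]
      have hwdown : x.toWord = (x * lett (m.1, !m.2)).toWord ++ [((m.1, !m.2).1, !(m.1, !m.2).2)] := by
        rw [htw, hwm]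
        simp
      have hnm : s(x, x * lett (m.1, !m.2)) ∉
          geodUnion 1 (Function.mulSupport (f : FreeGroup X → A)) := by
        intro hc
        rw [geodUnion, Set.mem_iUnion₂] at hc
        obtain ⟨h, hh, hcm⟩ := hc
        have := (mem_geodEdges_iff' hwdown).1 hcm
        exact hcov ⟨h, hh, this⟩
      refine ⟨inr (lett (m.1, !m.2)),
        Or.inr ⟨lett (m.1, !m.2), mem_freeGenSet_iff.2 ⟨_, rfl⟩, rfl⟩, ?_⟩
      rw [mk_mul_inr]
      exact le_of_eq (phi_down_not_mem SA hwdown hnm)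
  · have hwl : wordLength SA ((f : FreeGroup X → A) x) ≠ 0 := fun h0 =>
      hfx (eq_one_of_wordLength_eq_zero hSA.symm hSA.closure_eq_top h0)
    obtain ⟨l, hl, hlen, hprod⟩ :=
      wordLength_spec hSA.symm hSA.closure_eq_top ((f : FreeGroup X → A) x)
    have hlne : l ≠ [] := by
      intro e
      rw [e] at hlen
      exact hwl hlen.symm
    obtain ⟨l', aN, rfl⟩ := (List.eq_nil_or_concat l).resolve_left hlne
    simp only [List.concat_eq_append] at hl hlen hprod
    have ha' : aN⁻¹ ∈ SA := hSA.symm aN (hl aN (by simp))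
    have hless : wordLength SA ((f : FreeGroup X → A) x * aN⁻¹) + 1
        ≤ wordLength SA ((f : FreeGroup X → A) x) := by
      have hpr : l'.prod = (f : FreeGroup X → A) x * aN⁻¹ := by
        rw [← hprod]
        simp [List.prod_append]
      have h1 : wordLength SA ((f : FreeGroup X → A) x * aN⁻¹) ≤ l'.length :=
        wordLength_le (fun z hz => hl z (by simp [hz])) hpr
      rw [← hlen]
      simp only [List.length_append, List.length_singleton]
      omega
    refine ⟨inl (lampSingle A (FreeGroup X) aN⁻¹), Or.inl ⟨aN⁻¹, ha', rfl⟩, ?_⟩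
    have := phi_inl SA f x aN⁻¹
    omega

lemma wordLength_le_phi (SA : Set A) (hSA : IsSymmGen SA) (g : Wreath A (FreeGroup X)) :
    wordLength (stdGen SA (freeGenSet X)) g ≤ phi SA g := by
  generalize hn : phi SA g = n
  induction n using Nat.strong_induction_on generalizing g with
  | _ n ih =>
    by_cases hg : g = 1
    · rw [hg, wordLength_one]
      omega
    · obtain ⟨f, x⟩ := g
      obtain ⟨s, hs, hdec⟩ := descent SA hSA f x hg
      have h1 : wordLength (stdGen SA (freeGenSet X)) (⟨f, x⟩ : Wreath A (FreeGroup X))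
          ≤ wordLength (stdGen SA (freeGenSet X))
              ((⟨f, x⟩ : Wreath A (FreeGroup X)) * s) + 1 :=
        le_wordLength_mul (stdGen_symm hSA) (stdGen_closure hSA) hs
      have h2 : wordLength (stdGen SA (freeGenSet X))
            ((⟨f, x⟩ : Wreath A (FreeGroup X)) * s)
          ≤ phi SA ((⟨f, x⟩ : Wreath A (FreeGroup X)) * s) :=
        ih _ (by omega) _ rfl
      omega

theorem wordLength_eq_phi (SA : Set A) (hSA : IsSymmGen SA) (g : Wreath A (FreeGroup X)) :
    wordLength (stdGen SA (freeGenSet X)) g = phi SA g :=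
  le_antisymm (wordLength_le_phi SA hSA g) (phi_le_wordLength SA hSA g)

end Formula

end DeadEnd

/-- Characterization of dead ends in `A ≀ F(X)` with standard generators: `g = (f, x)`
is a dead end iff `f(x)` is a dead end of `(A, S_A)`, every edge `{x, xs}` (`s ∈ S`)
lies in `[1, supp f]`, and `x = 1`. -/
theorem wreath_freeGroup_deadEnd_iff {X A : Type*} [DecidableEq X] [Fintype X] [Nonempty X]
    [Group A] (SA : Set A) (hSA : IsSymmGen SA)
    (f : FinSuppSubgroup A (FreeGroup X)) (x : FreeGroup X) :
    (∀ s ∈ stdGen SA (freeGenSet X),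
        wordLength (stdGen SA (freeGenSet X)) ((⟨f, x⟩ : Wreath A (FreeGroup X)) * s) ≤
          wordLength (stdGen SA (freeGenSet X)) (⟨f, x⟩ : Wreath A (FreeGroup X))) ↔
      ((∀ a ∈ SA, wordLength SA ((f : FreeGroup X → A) x * a) ≤
          wordLength SA ((f : FreeGroup X → A) x)) ∧
        (∀ s ∈ freeGenSet X,
          s(x, x * s) ∈ geodUnion 1 (Function.mulSupport (f : FreeGroup X → A))) ∧
        x = 1) := by
  open DeadEnd SemidirectProduct FreeGroup in
  constructor
  · intro hde
    have hphi : ∀ s ∈ stdGen SA (freeGenSet X),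
        phi SA ((⟨f, x⟩ : Wreath A (FreeGroup X)) * s)
          ≤ phi SA (⟨f, x⟩ : Wreath A (FreeGroup X)) := by
      intro s hs
      rw [← wordLength_eq_phi SA hSA, ← wordLength_eq_phi SA hSA]
      exact hde s hs
    have hcond2 : ∀ s ∈ freeGenSet X,
        s(x, x * s) ∈ geodUnion 1 (Function.mulSupport (f : FreeGroup X → A)) := by
      intro s hs
      obtain ⟨ℓ, rfl⟩ := mem_freeGenSet_iff.1 hs
      by_contra hnm
      rcases mul_lett_cases x ℓ with hw | hw
      · have hkey := phi_up_not_mem SA hw hnm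
        have hp := hphi (inr (lett ℓ)) (Or.inr ⟨_, mem_freeGenSet_iff.2 ⟨ℓ, rfl⟩, rfl⟩)
        rw [mk_mul_inr] at hp
        omega
      · set m : X × Bool := (ℓ.1, !ℓ.2) with hm
        have hwup : (x * lett m).toWord = x.toWord ++ [m] := by
          rcases mul_lett_cases x m with h2 | h2
          · exact h2
          · exfalso
            rw [hw] at h2
            have h3 := congrArg List.getLast? h2
            rw [List.getLast?_concat, List.getLast?_concat] at h3
            have h4 : m = (m.1, !m.2) := by
              injection h3
            have h5 : m.2 = !m.2 := congrArg Prod.snd h4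
            simp at h5
        have hnm' : s(x, x * lett m) ∉
            geodUnion 1 (Function.mulSupport (f : FreeGroup X → A)) := by
          intro hc
          rw [geodUnion, Set.mem_iUnion₂] at hc
          obtain ⟨h, hh, hcm⟩ := hc
          have hpre : (x * lett m).toWord <+: h.toWord := (mem_geodEdges_iff hwup).1 hcm
          have hpre2 : x.toWord <+: h.toWord := by
            refine List.IsPrefix.trans ?_ hpre
            rw [hwup]
            exact List.prefix_append _ _
          apply hnm
          rw [geodUnion, Set.mem_iUnion₂]
          exact ⟨h, hh, (mem_geodEdges_iff' hw).2 hpre2⟩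
        have hkey := phi_up_not_mem SA hwup hnm'
        have hp := hphi (inr (lett m)) (Or.inr ⟨_, mem_freeGenSet_iff.2 ⟨m, rfl⟩, rfl⟩)
        rw [mk_mul_inr] at hp
        omega
    have hcond3 : x = 1 := by
      by_contra hx1
      have hxw : x.toWord ≠ [] := fun e => hx1 (toWord_eq_nil_iff.1 e)
      obtain ⟨w', m, hwm⟩ := (List.eq_nil_or_concat x.toWord).resolve_left hxw
      rw [List.concat_eq_append] at hwm
      have hw'red : FreeGroup.reduce w' = w' := by
        have hw2 : w' = x.toWord.take w'.length := by
          rw [hwm, List.take_append_of_le_length le_rfl, List.take_length]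
        rw [hw2, reduce_toWord_take]
      have hx' : x * lett (m.1, !m.2) = FreeGroup.mk w' := by
        conv_lhs => rw [← mk_toWord (x := x), hwm, lett, FreeGroup.mul_mk]
        have h6 : w' ++ [m] ++ [(m.1, !m.2)] = w' ++ (m.1, m.2) :: (m.1, !m.2) :: [] := by
          simp
        rw [h6]
        apply FreeGroup.reduce.exact
        rw [FreeGroup.reduce.Step.eq (FreeGroup.Red.Step.not (L₂ := []))]
        rw [List.append_nil]
      have htw : (x * lett (m.1, !m.2)).toWord = w' := by
        rw [hx', toWord_mk, hw'red]
      have hwdown : x.toWord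
          = (x * lett (m.1, !m.2)).toWord ++ [((m.1, !m.2).1, !(m.1, !m.2).2)] := by
        rw [htw, hwm]
        simp
      have hmem := hcond2 (lett (m.1, !m.2)) (mem_freeGenSet_iff.2 ⟨_, rfl⟩)
      have hkey := phi_down_mem SA hwdown hmem
      have hp := hphi (inr (lett (m.1, !m.2)))
        (Or.inr ⟨_, mem_freeGenSet_iff.2 ⟨(m.1, !m.2), rfl⟩, rfl⟩)
      rw [mk_mul_inr] at hp
      omega
    have hcond1 : ∀ a ∈ SA, wordLength SA ((f : FreeGroup X → A) x * a)
        ≤ wordLength SA ((f : FreeGroup X → A) x) := by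
      intro a ha
      have hp := hphi (inl (lampSingle A (FreeGroup X) a)) (Or.inl ⟨a, ha, rfl⟩)
      have hkey := phi_inl SA f x a
      omega
    exact ⟨hcond1, hcond2, hcond3⟩
  · rintro ⟨h1, h2, rfl⟩
    intro s hs
    rw [wordLength_eq_phi SA hSA, wordLength_eq_phi SA hSA]
    rcases hs with ⟨a, ha, rfl⟩ | ⟨t, ht, rfl⟩
    · show phi SA ((⟨f, 1⟩ : Wreath A (FreeGroup X)) * inl (lampSingle A (FreeGroup X) a))
          ≤ phi SA (⟨f, 1⟩ : Wreath A (FreeGroup X))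
      have hkey := phi_inl SA f 1 a
      have hwla := h1 a ha
      omega
    · show phi SA ((⟨f, 1⟩ : Wreath A (FreeGroup X)) * inr t)
          ≤ phi SA (⟨f, 1⟩ : Wreath A (FreeGroup X))
      obtain ⟨ℓ, rfl⟩ := mem_freeGenSet_iff.1 ht
      rw [mk_mul_inr]
      have hwup : ((1 : FreeGroup X) * lett ℓ).toWord = (1 : FreeGroup X).toWord ++ [ℓ] := by
        rw [one_mul, toWord_lett, toWord_one]
        rfl
      have hmem := h2 (lett ℓ) ht
      have hkey := phi_up_mem SA hwup hmem
      omega
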